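/- Let κ_1 > κ_2 ≥ ... ≥ κ_n > 0 with κ_{l+1} ≤ δ' κ_1 for some 1 ≤ l ≤ k−1 and δ' ∈ (0,1). Then κ_1 · σ_{l-1}(κ|1)/σ_l(κ) ≥ 1 − C δ', where C depends only on n and l. -/

import Mathlib

open Finset

/-- The `k`-th elementary symmetric polynomial of `κ : Fin n → ℝ`. -/
noncomputable def esymm (n k : ℕ) (κ : Fin n → ℝ) : ℝ :=
  ∑ s ∈ Finset.univ.powersetCard k, ∏ i ∈ s, κ i

/-- `σ_k(κ|p)`: elementary symmetric polynomial with the `p`-th entry deleted. -/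
noncomputable def esymmDel (n k : ℕ) (κ : Fin n → ℝ) (p : Fin n) : ℝ :=
  ∑ s ∈ (Finset.univ.erase p).powersetCard k, ∏ i ∈ s, κ i

/-- `σ_k(κ|pq)`: elementary symmetric polynomial with the `p`-th and `q`-th entries deleted. -/
noncomputable def esymmDel2 (n k : ℕ) (κ : Fin n → ℝ) (p q : Fin n) : ℝ :=
  ∑ s ∈ ((Finset.univ.erase p).erase q).powersetCard k, ∏ i ∈ s, κ i

/-- Splitting identity: `σ_l(κ) = κ_a σ_{l-1}(κ|a) + σ_l(κ|a)`. -/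
lemma esymm_split (n l : ℕ) (hl : 1 ≤ l) (κ : Fin n → ℝ) (a : Fin n) :
    esymm n l κ = κ a * esymmDel n (l - 1) κ a + esymmDel n l κ a := by
  classical
  unfold esymm esymmDel
  rw [← Finset.sum_filter_add_sum_filter_not (Finset.univ.powersetCard l) (fun s => a ∈ s)]
  congr 1
  · rw [Finset.mul_sum]
    refine Finset.sum_bij' (fun s _ => s.erase a) (fun t _ => insert a t) ?_ ?_ ?_ ?_ ?_
    · intro s hs
      simp only [Finset.mem_filter, Finset.mem_powersetCard] at hs
      rw [Finset.mem_powersetCard]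
      refine ⟨?_, ?_⟩
      · intro x hx
        rw [Finset.mem_erase] at hx ⊢
        exact ⟨hx.1, Finset.mem_univ x⟩
      · rw [Finset.card_erase_of_mem hs.2, hs.1.2]
    · intro t ht
      rw [Finset.mem_powersetCard] at ht
      have hat : a ∉ t := fun h => (Finset.mem_erase.mp (ht.1 h)).1 rfl
      simp only [Finset.mem_filter, Finset.mem_powersetCard]
      refine ⟨⟨fun x _ => Finset.mem_univ x, ?_⟩, Finset.mem_insert_self a t⟩
      rw [Finset.card_insert_of_notMem hat, ht.2]
      omega
    · intro s hs
      simp only [Finset.mem_filter] at hs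
      exact Finset.insert_erase hs.2
    · intro t ht
      rw [Finset.mem_powersetCard] at ht
      have hat : a ∉ t := fun h => (Finset.mem_erase.mp (ht.1 h)).1 rfl
      exact Finset.erase_insert hat
    · intro s hs
      simp only [Finset.mem_filter] at hs
      exact (Finset.mul_prod_erase s κ hs.2).symm
  · apply Finset.sum_congr _ (fun _ _ => rfl)
    ext s
    simp only [Finset.mem_filter, Finset.mem_powersetCard, Finset.subset_erase]
    constructor
    · rintro ⟨⟨hsub, hcard⟩, hna⟩
      exact ⟨⟨hsub, hna⟩, hcard⟩
    · rintro ⟨⟨hsub, hna⟩, hcard⟩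
      exact ⟨⟨hsub, hcard⟩, hna⟩

/-- κ₁·σ_{l-1}(κ|1)/σ_l(κ) ≥ 1 − Cδ' when κ_{l+1} ≤ δ'κ₁. -/
theorem quotient_lower_bound (n l : ℕ) (hl : 1 ≤ l) :
    ∃ C : ℝ, 0 < C ∧ ∀ (k : ℕ) (hlk : l ≤ k - 1) (hkn : k ≤ n),
      ∀ κ : Fin n → ℝ, (∀ i, 0 < κ i) →
      (∀ i j : Fin n, i ≤ j → κ j ≤ κ i) →
      (∀ p : Fin n, p ≠ ⟨0, by omega⟩ → κ p < κ ⟨0, by omega⟩) →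
      ∀ δ' : ℝ, 0 < δ' → δ' < 1 →
      κ ⟨l, by omega⟩ ≤ δ' * κ ⟨0, by omega⟩ →
      1 - C * δ' ≤ κ ⟨0, by omega⟩ * esymmDel n (l - 1) κ ⟨0, by omega⟩ / esymm n l κ := by
  classical
  refine ⟨(n.choose l : ℝ) + 1, by positivity, ?_⟩
  intro k hlk hkn κ hpos hmono _hstrict δ' hδ0 hδ1 hδ
  have hn : l + 1 ≤ n := by omega
  set a : Fin n := ⟨0, by omega⟩ with ha
  -- the reference index set s₀ = {0, 1, ..., l-1}
  set f : Fin l → Fin n := fun j => ⟨j.val, by omega⟩ with hf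
  have hfinj : Function.Injective f := by
    intro i j hij
    simp only [hf, Fin.mk.injEq] at hij
    exact Fin.ext hij
  set s₀ : Finset (Fin n) := Finset.univ.image f with hs₀
  have hs₀mem : s₀ ∈ Finset.univ.powersetCard l := by
    rw [Finset.mem_powersetCard]
    refine ⟨fun x _ => Finset.mem_univ x, ?_⟩
    rw [hs₀, Finset.card_image_of_injective _ hfinj, Finset.card_univ, Fintype.card_fin]
  set T : ℝ := ∏ i ∈ s₀, κ i with hT
  have hTpos : 0 < T := Finset.prod_pos (fun i _ => hpos i)
  set E : ℝ := esymm n l κ with hE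
  have hEpos : 0 < E := by
    rw [hE]
    unfold esymm
    apply Finset.sum_pos (fun s _ => Finset.prod_pos (fun i _ => hpos i))
    rw [Finset.powersetCard_nonempty, Finset.card_univ, Fintype.card_fin]
    omega
  have hTE : T ≤ E := by
    rw [hE]
    unfold esymm
    exact Finset.single_le_sum (f := fun s => ∏ i ∈ s, κ i)
      (fun s _ => le_of_lt (Finset.prod_pos (fun i _ => hpos i))) hs₀mem
  -- bound each term of esymmDel n l κ a
  have hterm : ∀ s ∈ (Finset.univ.erase a).powersetCard l, ∏ i ∈ s, κ i ≤ δ' * T := by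
    intro s hs
    rw [Finset.mem_powersetCard] at hs
    obtain ⟨hsub, hcard⟩ := hs
    set e := s.orderEmbOfFin hcard with he
    have himg : Finset.univ.image e = s := by
      rw [← Finset.coe_inj, Finset.coe_image, Finset.coe_univ, Set.image_univ,
        Finset.range_orderEmbOfFin]
    have hkey : ∀ m : ℕ, (hm : m < l) → m + 1 ≤ (e ⟨m, hm⟩).val := by
      intro m
      induction m with
      | zero =>
        intro hm
        have h1 : e ⟨0, hm⟩ ∈ s := Finset.orderEmbOfFin_mem s hcard _
        have h2 : e ⟨0, hm⟩ ≠ a := (Finset.mem_erase.mp (hsub h1)).1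
        have h3 : (e ⟨0, hm⟩).val ≠ 0 := by
          intro h
          exact h2 (Fin.ext h)
        omega
      | succ m ih =>
        intro hm
        have h1 := ih (by omega)
        have h2 : e ⟨m, by omega⟩ < e ⟨m + 1, hm⟩ := by
          apply (s.orderEmbOfFin hcard).strictMono
          simp [Fin.lt_def]
        rw [Fin.lt_def] at h2
        omega
    -- g : ℕ → ℝ extension of κ
    set g : ℕ → ℝ := fun m => if h : m < n then κ ⟨m, h⟩ else 1 with hg
    have hprod1 : ∏ i ∈ s, κ i = ∏ j : Fin l, κ (e j) := by
      rw [← himg, Finset.prod_image]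
      intro x _ y _ hxy
      exact (s.orderEmbOfFin hcard).injective hxy
    have hprod2 : ∏ j : Fin l, κ (e j) ≤ ∏ j : Fin l, g (j.val + 1) := by
      apply Finset.prod_le_prod (fun j _ => le_of_lt (hpos _))
      intro j _
      have hj1 : j.val + 1 < n := by omega
      rw [hg]
      simp only [hj1, dif_pos]
      apply hmono
      rw [Fin.le_def]
      exact hkey j.val j.isLt
    have hprod3 : ∏ j : Fin l, g (j.val + 1) = ∏ m ∈ Finset.range l, g (m + 1) := by
      rw [Fin.prod_univ_eq_prod_range (fun m => g (m + 1))]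
    have hprodT : T = ∏ m ∈ Finset.range l, g m := by
      rw [hT, hs₀, Finset.prod_image (fun x _ y _ h => hfinj h)]
      have hfg : ∀ j : Fin l, κ (f j) = g j.val := by
        intro j
        rw [hg, hf]
        simp only [dif_pos (show (j : ℕ) < n by omega)]
      calc ∏ x : Fin l, κ (f x) = ∏ x : Fin l, g x.val :=
            Finset.prod_congr rfl (fun j _ => hfg j)
        _ = ∏ m ∈ Finset.range l, g m := Fin.prod_univ_eq_prod_range _ _
    obtain ⟨m, rfl⟩ : ∃ m, l = m + 1 := ⟨l - 1, by omega⟩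
    have hQpos : 0 < ∏ i ∈ Finset.range m, g (i + 1) := by
      apply Finset.prod_pos
      intro i hi
      rw [Finset.mem_range] at hi
      rw [hg]
      simp only [dif_pos (show i + 1 < n by omega)]
      exact hpos _
    rw [hprod1, hprodT]
    calc ∏ j : Fin (m + 1), κ (e j) ≤ ∏ j : Fin (m + 1), g (j.val + 1) := hprod2
      _ = ∏ i ∈ Finset.range (m + 1), g (i + 1) := hprod3
      _ = (∏ i ∈ Finset.range m, g (i + 1)) * g (m + 1) := Finset.prod_range_succ _ _
      _ ≤ (∏ i ∈ Finset.range m, g (i + 1)) * (δ' * g 0) := by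
          apply mul_le_mul_of_nonneg_left _ (le_of_lt hQpos)
          have h1 : g (m + 1) = κ ⟨m + 1, by omega⟩ := by
            rw [hg]; simp only [dif_pos (show m + 1 < n by omega)]
          have h2 : g 0 = κ ⟨0, by omega⟩ := by
            rw [hg]; simp only [dif_pos (show 0 < n by omega)]
          rw [h1, h2]
          exact hδ
      _ = δ' * ((∏ i ∈ Finset.range m, g (i + 1)) * g 0) := by ring
      _ = δ' * ∏ i ∈ Finset.range (m + 1), g i := by rw [Finset.prod_range_succ' g m]
  -- bound the deleted esymm
  have hD : esymmDel n l κ a ≤ ((n.choose l : ℝ) + 1) * δ' * E := by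
    unfold esymmDel
    calc ∑ s ∈ (Finset.univ.erase a).powersetCard l, ∏ i ∈ s, κ i
        ≤ ((Finset.univ.erase a).powersetCard l).card • (δ' * T) :=
          Finset.sum_le_card_nsmul _ _ _ hterm
      _ = (((Finset.univ.erase a).powersetCard l).card : ℝ) * (δ' * T) := by
          rw [nsmul_eq_mul]
      _ ≤ ((n.choose l : ℝ) + 1) * (δ' * T) := by
          apply mul_le_mul_of_nonneg_right _ (by positivity)
          rw [Finset.card_powersetCard, Finset.card_erase_of_mem (Finset.mem_univ a),
            Finset.card_univ, Fintype.card_fin]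
          have : (n - 1).choose l ≤ n.choose l := Nat.choose_le_choose l (by omega)
          exact_mod_cast le_trans (Nat.cast_le.mpr this) (by linarith)
      _ ≤ ((n.choose l : ℝ) + 1) * (δ' * E) := by
          apply mul_le_mul_of_nonneg_left _ (by positivity)
          exact mul_le_mul_of_nonneg_left hTE (le_of_lt hδ0)
      _ = ((n.choose l : ℝ) + 1) * δ' * E := by ring
  have hsplit := esymm_split n l hl κ a
  rw [le_div_iff₀ hEpos]
  have : κ a * esymmDel n (l - 1) κ a = E - esymmDel n l κ a := by
    simp only [hE]
    linarith
  rw [this]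
  nlinarith [hD, hEpos]
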